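/- For p > 1 there is a constant c = c(k,p) ≥ 1 such that for all z, η ∈ ℝ^k: c^{-1} |z-η| ≤ |V_p(z) - V_p(η)| / (1+|z|^2+|η|^2)^{(p-2)/4} ≤ c |z-η|. -/

import Mathlib

open Real

noncomputable def V (p : ℝ) {k : ℕ} (z : EuclideanSpace ℝ (Fin k)) :
    EuclideanSpace ℝ (Fin k) :=
  ((1 + ‖z‖ ^ 2) ^ ((p - 2) / 4)) • z

namespace VpAux
open scoped RealInnerProductSpace



noncomputable def gg (α a : ℝ) : ℝ := (1 + a ^ 2) ^ α * a

lemma hasDerivAt_gg (α t : ℝ) :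
    HasDerivAt (gg α) ((1 + t ^ 2) ^ (α - 1) * (1 + (1 + 2 * α) * t ^ 2)) t := by
  have hpos : (0:ℝ) < 1 + t ^ 2 := by positivity
  have h1 : HasDerivAt (fun t : ℝ => 1 + t ^ 2) (2 * t) t := by
    simpa using ((hasDerivAt_pow 2 t).const_add 1)
  have h2 : HasDerivAt (fun t : ℝ => (1 + t ^ 2) ^ α)
      (2 * t * α * (1 + t ^ 2) ^ (α - 1)) t :=
    h1.rpow_const (Or.inl (ne_of_gt hpos))
  have h3 : HasDerivAt (gg α)
      (2 * t * α * (1 + t ^ 2) ^ (α - 1) * t + (1 + t ^ 2) ^ α * 1) t :=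
    h2.mul (hasDerivAt_id t)
  have hfact : (1 + t ^ 2 : ℝ) ^ α = (1 + t ^ 2) ^ (α - 1) * (1 + t ^ 2) := by
    rw [← Real.rpow_add_one (ne_of_gt hpos) (α - 1)]
    norm_num
  convert h3 using 1
  rw [hfact]; ring

lemma gg_cont (α : ℝ) : Continuous (gg α) := by
  rw [continuous_iff_continuousAt]
  exact fun t => (hasDerivAt_gg α t).differentiableAt.continuousAt

lemma mvt_upper (α C a : ℝ)
    (h : ∀ t ∈ Set.Icc (0:ℝ) a, (1 + t ^ 2) ^ (α - 1) * (1 + (1 + 2 * α) * t ^ 2) ≤ C)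
    {b : ℝ} (hb : 0 ≤ b) (hba : b ≤ a) : gg α a - gg α b ≤ C * (a - b) := by
  have hder : ∀ x : ℝ, HasDerivAt (fun t => C * t - gg α t)
      (C - (1 + x ^ 2) ^ (α - 1) * (1 + (1 + 2 * α) * x ^ 2)) x := by
    intro x
    have h1 : HasDerivAt (fun t : ℝ => C * t) (C * 1) x := (hasDerivAt_id x).const_mul C
    exact (h1.sub (hasDerivAt_gg α x)).congr_deriv (by ring)
  have key : MonotoneOn (fun t => C * t - gg α t) (Set.Icc 0 a) := by
    apply monotoneOn_of_deriv_nonneg (convex_Icc _ _)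
    · exact ((continuous_const.mul continuous_id).sub (gg_cont α)).continuousOn
    · exact fun x _ => (hder x).differentiableAt.differentiableWithinAt
    · intro x hx
      rw [(hder x).deriv]
      have := h x (interior_subset hx)
      linarith
  have h1 := key (Set.mem_Icc.2 ⟨hb, hba⟩)
    (Set.mem_Icc.2 ⟨le_trans hb hba, le_refl a⟩) hba
  dsimp at h1
  linarith

lemma mvt_lower (α C a : ℝ)
    (h : ∀ t ∈ Set.Icc (0:ℝ) a, C ≤ (1 + t ^ 2) ^ (α - 1) * (1 + (1 + 2 * α) * t ^ 2))
    {b : ℝ} (hb : 0 ≤ b) (hba : b ≤ a) : C * (a - b) ≤ gg α a - gg α b := by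
  have hder : ∀ x : ℝ, HasDerivAt (fun t => gg α t - C * t)
      ((1 + x ^ 2) ^ (α - 1) * (1 + (1 + 2 * α) * x ^ 2) - C) x := by
    intro x
    have h1 : HasDerivAt (fun t : ℝ => C * t) (C * 1) x := (hasDerivAt_id x).const_mul C
    exact ((hasDerivAt_gg α x).sub h1).congr_deriv (by ring)
  have key : MonotoneOn (fun t => gg α t - C * t) (Set.Icc 0 a) := by
    apply monotoneOn_of_deriv_nonneg (convex_Icc _ _)
    · exact ((gg_cont α).sub (continuous_const.mul continuous_id)).continuousOn
    · exact fun x _ => (hder x).differentiableAt.differentiableWithinAt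
    · intro x hx
      rw [(hder x).deriv]
      have := h x (interior_subset hx)
      linarith
  have h1 := key (Set.mem_Icc.2 ⟨hb, hba⟩)
    (Set.mem_Icc.2 ⟨le_trans hb hba, le_refl a⟩) hba
  dsimp at h1
  linarith



lemma rpow_fact (α t : ℝ) : (1 + t ^ 2 : ℝ) ^ α = (1 + t ^ 2) ^ (α - 1) * (1 + t ^ 2) := by
  rw [← Real.rpow_add_one (by positivity) (α - 1)]
  norm_num

lemma diff_bounds (α : ℝ) (hq : 0 < 1 + 2 * α) {a b : ℝ} (hb : 0 ≤ b) (hba : b ≤ a) :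
    min 1 (1 + 2 * α) * (1 + a ^ 2) ^ α * (a - b) ≤ gg α a - gg α b ∧
    gg α a - gg α b ≤ max 1 (1 + 2 * α) * (1 + a ^ 2) ^ α * (a - b) := by
  have ha : 0 ≤ a := le_trans hb hba
  have hA : (0:ℝ) < (1 + a ^ 2) ^ α := Real.rpow_pos_of_pos (by positivity) α
  rcases le_or_gt 0 α with hα | hα
  · constructor
    · have h1 : (1 + b ^ 2) ^ α ≤ (1 + a ^ 2) ^ α :=
        Real.rpow_le_rpow (by positivity) (by nlinarith) hα
      have hmin : min 1 (1 + 2 * α) ≤ 1 := min_le_left _ _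
      unfold gg
      nlinarith [mul_le_mul_of_nonneg_right h1 hb,
        mul_nonneg hA.le (sub_nonneg.2 hba)]
    · have hub := mvt_upper α ((1 + 2 * α) * (1 + a ^ 2) ^ α) a ?_ hb hba
      · have : (1 + 2 * α) ≤ max 1 (1 + 2 * α) := le_max_right _ _
        nlinarith [mul_nonneg hA.le (sub_nonneg.2 hba)]
      · intro t ht
        obtain ⟨ht0, hta⟩ := ht
        have hpt : (0:ℝ) < 1 + t ^ 2 := by positivity
        have hP : (0:ℝ) ≤ (1 + t ^ 2) ^ (α - 1) := Real.rpow_nonneg (by positivity) _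
        have e1 : 1 + (1 + 2 * α) * t ^ 2 ≤ (1 + 2 * α) * (1 + t ^ 2) := by nlinarith
        have e3 : (1 + t ^ 2 : ℝ) ^ α ≤ (1 + a ^ 2) ^ α :=
          Real.rpow_le_rpow (by positivity) (by nlinarith) hα
        calc (1 + t ^ 2) ^ (α - 1) * (1 + (1 + 2 * α) * t ^ 2)
            ≤ (1 + t ^ 2) ^ (α - 1) * ((1 + 2 * α) * (1 + t ^ 2)) :=
              mul_le_mul_of_nonneg_left e1 hP
          _ = (1 + 2 * α) * (1 + t ^ 2) ^ α := by rw [rpow_fact α t]; ring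
          _ ≤ (1 + 2 * α) * (1 + a ^ 2) ^ α := by nlinarith
  · constructor
    · have hlb := mvt_lower α ((1 + 2 * α) * (1 + a ^ 2) ^ α) a ?_ hb hba
      · have : min 1 (1 + 2 * α) ≤ 1 + 2 * α := min_le_right _ _
        nlinarith [mul_nonneg hA.le (sub_nonneg.2 hba)]
      · intro t ht
        obtain ⟨ht0, hta⟩ := ht
        have hpt : (0:ℝ) < 1 + t ^ 2 := by positivity
        have hP : (0:ℝ) ≤ (1 + t ^ 2) ^ (α - 1) := Real.rpow_nonneg (by positivity) _
        have e1 : (1 + 2 * α) * (1 + t ^ 2) ≤ 1 + (1 + 2 * α) * t ^ 2 := by nlinarith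
        have e3 : (1 + a ^ 2 : ℝ) ^ α ≤ (1 + t ^ 2) ^ α :=
          Real.rpow_le_rpow_of_nonpos (by positivity) (by nlinarith) hα.le
        calc (1 + 2 * α) * (1 + a ^ 2) ^ α ≤ (1 + 2 * α) * (1 + t ^ 2) ^ α := by nlinarith
          _ = (1 + t ^ 2) ^ (α - 1) * ((1 + 2 * α) * (1 + t ^ 2)) := by rw [rpow_fact α t]; ring
          _ ≤ (1 + t ^ 2) ^ (α - 1) * (1 + (1 + 2 * α) * t ^ 2) :=
              mul_le_mul_of_nonneg_left e1 hP
    · have h1 : (1 + a ^ 2) ^ α ≤ (1 + b ^ 2) ^ α :=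
        Real.rpow_le_rpow_of_nonpos (by positivity) (by nlinarith) hα.le
      have hmax : (1:ℝ) ≤ max 1 (1 + 2 * α) := le_max_left _ _
      unfold gg
      nlinarith [mul_le_mul_of_nonneg_right h1 hb,
        mul_nonneg hA.le (sub_nonneg.2 hba)]

lemma gg_nonneg (α : ℝ) {b : ℝ} (hb : 0 ≤ b) : 0 ≤ gg α b :=
  mul_nonneg (Real.rpow_nonneg (by positivity) _) hb

lemma add_bounds (α : ℝ) (hq : 0 < 1 + 2 * α) {a b : ℝ} (hb : 0 ≤ b) (hba : b ≤ a) :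
    (1 / 2) * (1 + a ^ 2) ^ α * (a + b) ≤ gg α a + gg α b ∧
    gg α a + gg α b ≤ 2 * (1 + a ^ 2) ^ α * (a + b) := by
  have ha : 0 ≤ a := le_trans hb hba
  have hA : (0:ℝ) < (1 + a ^ 2) ^ α := Real.rpow_pos_of_pos (by positivity) α
  have hgb : 0 ≤ gg α b := gg_nonneg α hb
  have hd : 0 ≤ gg α a - gg α b := by
    have := (diff_bounds α hq hb hba).1
    have hμ : 0 < min 1 (1 + 2 * α) := lt_min one_pos hq
    nlinarith [mul_nonneg hA.le (sub_nonneg.2 hba)]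
  have hga : gg α a = (1 + a ^ 2) ^ α * a := rfl
  constructor
  · nlinarith
  · nlinarith



noncomputable def KK (α : ℝ) : ℝ := 2 * 2 ^ |α| * max 1 (1 + 2 * α) * max 1 (1 + 2 * α)⁻¹

lemma one_le_rpow2_abs (α : ℝ) : (1:ℝ) ≤ 2 ^ |α| := by
  rw [show (1:ℝ) = 2 ^ (0:ℝ) from (Real.rpow_zero 2).symm]
  exact Real.rpow_le_rpow_of_exponent_le one_le_two (abs_nonneg α)

lemma base_comp (α : ℝ) {a b : ℝ} (hb : 0 ≤ b) (hba : b ≤ a) :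
    (1 + a ^ 2 + b ^ 2) ^ α ≤ 2 ^ |α| * (1 + a ^ 2) ^ α ∧
    (1 + a ^ 2) ^ α ≤ 2 ^ |α| * (1 + a ^ 2 + b ^ 2) ^ α := by
  have ha : 0 ≤ a := le_trans hb hba
  have h2 : (1:ℝ) ≤ 2 ^ |α| := one_le_rpow2_abs α
  have hA : (0:ℝ) < (1 + a ^ 2) ^ α := Real.rpow_pos_of_pos (by positivity) α
  have hL : (0:ℝ) < (1 + a ^ 2 + b ^ 2) ^ α := Real.rpow_pos_of_pos (by positivity) α
  rcases le_or_gt 0 α with hα | hα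
  · rw [abs_of_nonneg hα]
    constructor
    · calc (1 + a ^ 2 + b ^ 2) ^ α ≤ (2 * (1 + a ^ 2)) ^ α :=
            Real.rpow_le_rpow (by positivity) (by nlinarith) hα
        _ = 2 ^ α * (1 + a ^ 2) ^ α := Real.mul_rpow (by norm_num) (by positivity)
    · have e : (1 + a ^ 2 : ℝ) ^ α ≤ (1 + a ^ 2 + b ^ 2) ^ α :=
        Real.rpow_le_rpow (by positivity) (by nlinarith) hα
      rw [abs_of_nonneg hα] at h2
      nlinarith
  · rw [abs_of_neg hα]
    have h2' : (1:ℝ) ≤ 2 ^ (-α) := by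
      rw [show (1:ℝ) = 2 ^ (0:ℝ) from (Real.rpow_zero 2).symm]
      exact Real.rpow_le_rpow_of_exponent_le one_le_two (by linarith)
    constructor
    · have e : (1 + a ^ 2 + b ^ 2 : ℝ) ^ α ≤ (1 + a ^ 2) ^ α :=
        Real.rpow_le_rpow_of_nonpos (by positivity) (by nlinarith) hα.le
      nlinarith
    · have e : (1 + a ^ 2 : ℝ) ^ α ≤ ((1 + a ^ 2 + b ^ 2) / 2) ^ α :=
        Real.rpow_le_rpow_of_nonpos (by positivity) (by nlinarith) hα.le
      have e2 : ((1 + a ^ 2 + b ^ 2 : ℝ) / 2) ^ α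
          = (1 + a ^ 2 + b ^ 2) ^ α / 2 ^ α := Real.div_rpow (by positivity) (by norm_num) α
      have e3 : (1 + a ^ 2 + b ^ 2 : ℝ) ^ α / 2 ^ α = 2 ^ (-α) * (1 + a ^ 2 + b ^ 2) ^ α := by
        rw [Real.rpow_neg (by norm_num)]
        field_simp
      rw [e2, e3] at e
      exact e

lemma one_le_KK (α : ℝ) : 1 ≤ KK α := by
  have h2 := one_le_rpow2_abs α
  have h3 : (1:ℝ) ≤ max 1 (1 + 2 * α) := le_max_left _ _
  have h4 : (1:ℝ) ≤ max 1 (1 + 2 * α)⁻¹ := le_max_left _ _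
  have h5 : (1:ℝ) ≤ 2 * 2 ^ |α| := by linarith
  have h6 : (1:ℝ) ≤ 2 * 2 ^ |α| * max 1 (1 + 2 * α) := by nlinarith
  unfold KK; nlinarith

lemma KK_pos (α : ℝ) : 0 < KK α := lt_of_lt_of_le one_pos (one_le_KK α)

lemma min_mul_max_inv (x : ℝ) (hx : 0 < x) : min 1 x * max 1 x⁻¹ = 1 := by
  rcases le_or_gt 1 x with h | h
  · rw [min_eq_left h, max_eq_left ((inv_le_one₀ hx).2 h)]
    ring
  · rw [min_eq_right h.le, max_eq_right ((one_le_inv₀ hx).2 h.le)]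
    field_simp

lemma scalar_bounds (α : ℝ) (hq : 0 < 1 + 2 * α) {a b : ℝ} (hb : 0 ≤ b) (hba : b ≤ a) :
    ((KK α)⁻¹ * (1 + a ^ 2 + b ^ 2) ^ α * (a - b) ≤ gg α a - gg α b) ∧
    (gg α a - gg α b ≤ KK α * (1 + a ^ 2 + b ^ 2) ^ α * (a - b)) ∧
    ((KK α)⁻¹ * (1 + a ^ 2 + b ^ 2) ^ α * (a + b) ≤ gg α a + gg α b) ∧
    (gg α a + gg α b ≤ KK α * (1 + a ^ 2 + b ^ 2) ^ α * (a + b)) := by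
  have ha : 0 ≤ a := le_trans hb hba
  have hA : (0:ℝ) < (1 + a ^ 2) ^ α := Real.rpow_pos_of_pos (by positivity) α
  have hL : (0:ℝ) < (1 + a ^ 2 + b ^ 2) ^ α := Real.rpow_pos_of_pos (by positivity) α
  have hP : (1:ℝ) ≤ 2 ^ |α| := one_le_rpow2_abs α
  have hP0 : (0:ℝ) < 2 ^ |α| := lt_of_lt_of_le one_pos hP
  obtain ⟨hc1, hc2⟩ := base_comp α hb hba
  obtain ⟨hd1, hd2⟩ := diff_bounds α hq hb hba
  obtain ⟨hs1, hs2⟩ := add_bounds α hq hb hba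
  have hKpos := KK_pos α
  have hμ : 0 < min 1 (1 + 2 * α) := lt_min one_pos hq
  have hM : (1:ℝ) ≤ max 1 (1 + 2 * α) := le_max_left _ _
  have hM' : (1:ℝ) ≤ max 1 (1 + 2 * α)⁻¹ := le_max_left _ _
  have hid : min 1 (1 + 2 * α) * max 1 (1 + 2 * α)⁻¹ = 1 := min_mul_max_inv _ hq
  have hKeq : KK α = 2 * 2 ^ |α| * max 1 (1 + 2 * α) * max 1 (1 + 2 * α)⁻¹ := rfl
  have hab1 : 0 ≤ a - b := sub_nonneg.2 hba
  have hab2 : 0 ≤ a + b := by linarith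
  have hKμ : 2 ^ |α| ≤ KK α * min 1 (1 + 2 * α) := by
    have e : KK α * min 1 (1 + 2 * α)
        = 2 * 2 ^ |α| * max 1 (1 + 2 * α) * (min 1 (1 + 2 * α) * max 1 (1 + 2 * α)⁻¹) := by
      rw [hKeq]; ring
    rw [e, hid]
    nlinarith
  have hMM' : (1:ℝ) ≤ max 1 (1 + 2 * α) * max 1 (1 + 2 * α)⁻¹ := by nlinarith
  have hKhalf : 2 * 2 ^ |α| ≤ KK α := by
    rw [hKeq]
    nlinarith [mul_le_mul_of_nonneg_left hMM' (by positivity : (0:ℝ) ≤ 2 * 2 ^ |α|)]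
  have hMP : max 1 (1 + 2 * α) * 2 ^ |α| ≤ KK α := by
    rw [hKeq]
    nlinarith [mul_le_mul_of_nonneg_left hM' (by positivity :
      (0:ℝ) ≤ 2 * 2 ^ |α| * max 1 (1 + 2 * α)), mul_pos hP0 (lt_of_lt_of_le one_pos hM)]
  have hinv : 0 ≤ (KK α)⁻¹ := inv_nonneg.2 hKpos.le
  refine ⟨?_, ?_, ?_, ?_⟩
  · have key : (1 + a ^ 2 + b ^ 2) ^ α * (a - b) ≤ KK α * (gg α a - gg α b) := by
      have t1 := mul_le_mul_of_nonneg_right hc1 hab1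
      have t2 := mul_le_mul_of_nonneg_right hKμ
        (mul_nonneg hA.le hab1)
      have t3 := mul_le_mul_of_nonneg_left hd1 hKpos.le
      linarith [t1, t2, t3]
    calc (KK α)⁻¹ * (1 + a ^ 2 + b ^ 2) ^ α * (a - b)
        = (KK α)⁻¹ * ((1 + a ^ 2 + b ^ 2) ^ α * (a - b)) := by ring
      _ ≤ (KK α)⁻¹ * (KK α * (gg α a - gg α b)) := mul_le_mul_of_nonneg_left key hinv
      _ = gg α a - gg α b := by field_simp
  · have t1 := mul_le_mul_of_nonneg_right hc2 hab1
    have t2 := mul_le_mul_of_nonneg_left t1 (le_trans zero_le_one hM)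
    have t3 := mul_le_mul_of_nonneg_right hMP (mul_nonneg hL.le hab1)
    linarith [hd2, t2, t3]
  · have key : (1 + a ^ 2 + b ^ 2) ^ α * (a + b) ≤ KK α * (gg α a + gg α b) := by
      have t1 := mul_le_mul_of_nonneg_right hc1 hab2
      have t2 := mul_le_mul_of_nonneg_right hKhalf
        (mul_nonneg (mul_nonneg (by norm_num : (0:ℝ) ≤ 1/2) hA.le) hab2)
      have t3 := mul_le_mul_of_nonneg_left hs1 hKpos.le
      linarith [t1, t2, t3]
    calc (KK α)⁻¹ * (1 + a ^ 2 + b ^ 2) ^ α * (a + b)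
        = (KK α)⁻¹ * ((1 + a ^ 2 + b ^ 2) ^ α * (a + b)) := by ring
      _ ≤ (KK α)⁻¹ * (KK α * (gg α a + gg α b)) := mul_le_mul_of_nonneg_left key hinv
      _ = gg α a + gg α b := by field_simp
  · have t1 := mul_le_mul_of_nonneg_right hc2 hab2
    have t2 := mul_le_mul_of_nonneg_left t1 (by norm_num : (0:ℝ) ≤ 2)
    have t3 := mul_le_mul_of_nonneg_right hKhalf (mul_nonneg hL.le hab2)
    linarith [hs2, t2, t3]



lemma KK_pos' (α : ℝ) : 0 < KK α := lt_of_lt_of_le one_pos (one_le_KK α)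

lemma main_half {k : ℕ} (α : ℝ) (hq : 0 < 1 + 2 * α)
    (z η : EuclideanSpace ℝ (Fin k)) (hzη : ‖η‖ ≤ ‖z‖) :
    ‖(((1 + ‖z‖ ^ 2) ^ α) • z - ((1 + ‖η‖ ^ 2) ^ α) • η : EuclideanSpace ℝ (Fin k))‖ ^ 2
      ≤ (KK α * (1 + ‖z‖ ^ 2 + ‖η‖ ^ 2) ^ α * ‖z - η‖) ^ 2 ∧
    ((KK α)⁻¹ * (1 + ‖z‖ ^ 2 + ‖η‖ ^ 2) ^ α * ‖z - η‖) ^ 2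
      ≤ ‖(((1 + ‖z‖ ^ 2) ^ α) • z - ((1 + ‖η‖ ^ 2) ^ α) • η : EuclideanSpace ℝ (Fin k))‖ ^ 2 := by
  set a := ‖z‖ with hadef
  set b := ‖η‖ with hbdef
  have hb : 0 ≤ b := norm_nonneg η
  have ha : 0 ≤ a := norm_nonneg z
  set u := ⟪z, η⟫ with hudef
  have hK := KK_pos' α
  have hfa : (0:ℝ) < (1 + a ^ 2) ^ α := Real.rpow_pos_of_pos (by positivity) α
  have hfb : (0:ℝ) < (1 + b ^ 2) ^ α := Real.rpow_pos_of_pos (by positivity) α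
  have hL : (0:ℝ) < (1 + a ^ 2 + b ^ 2) ^ α := Real.rpow_pos_of_pos (by positivity) α
  have hN : ‖(((1 + a ^ 2) ^ α) • z - ((1 + b ^ 2) ^ α) • η : EuclideanSpace ℝ (Fin k))‖ ^ 2
      = gg α a ^ 2 - 2 * ((1 + a ^ 2) ^ α * (1 + b ^ 2) ^ α) * u + gg α b ^ 2 := by
    rw [norm_sub_sq_real, real_inner_smul_left, real_inner_smul_right,
      norm_smul, norm_smul, Real.norm_eq_abs, Real.norm_eq_abs,
      abs_of_pos hfa, abs_of_pos hfb]
    unfold gg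
    ring
  have hD : ‖z - η‖ ^ 2 = a ^ 2 - 2 * u + b ^ 2 := norm_sub_sq_real z η
  have hcs := abs_real_inner_le_norm z η
  have hu1 : -(a * b) ≤ u := by
    have := neg_abs_le u
    linarith
  have hu2 : u ≤ a * b := le_trans (le_abs_self u) hcs
  have hid : (1 + a ^ 2) ^ α * (1 + b ^ 2) ^ α * (a * b) = gg α a * gg α b := by
    unfold gg; ring
  obtain ⟨s1, s2, s3, s4⟩ := scalar_bounds α hq hb hzη
  have hnn1 : 0 ≤ (KK α)⁻¹ * (1 + a ^ 2 + b ^ 2) ^ α * (a - b) :=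
    mul_nonneg (mul_nonneg (inv_nonneg.2 hK.le) hL.le) (sub_nonneg.2 hzη)
  have hnn3 : 0 ≤ (KK α)⁻¹ * (1 + a ^ 2 + b ^ 2) ^ α * (a + b) :=
    mul_nonneg (mul_nonneg (inv_nonneg.2 hK.le) hL.le) (by linarith)
  have hd0 : 0 ≤ gg α a - gg α b := le_trans hnn1 s1
  have hsum0 : 0 ≤ gg α a + gg α b := le_trans hnn3 s3
  have q1 : ((KK α)⁻¹ * (1 + a ^ 2 + b ^ 2) ^ α * (a - b)) ^ 2 ≤ (gg α a - gg α b) ^ 2 :=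
    pow_le_pow_left₀ hnn1 s1 2
  have q2 : (gg α a - gg α b) ^ 2 ≤ (KK α * (1 + a ^ 2 + b ^ 2) ^ α * (a - b)) ^ 2 :=
    pow_le_pow_left₀ hd0 s2 2
  have q3 : ((KK α)⁻¹ * (1 + a ^ 2 + b ^ 2) ^ α * (a + b)) ^ 2 ≤ (gg α a + gg α b) ^ 2 :=
    pow_le_pow_left₀ hnn3 s3 2
  have q4 : (gg α a + gg α b) ^ 2 ≤ (KK α * (1 + a ^ 2 + b ^ 2) ^ α * (a + b)) ^ 2 :=
    pow_le_pow_left₀ hsum0 s4 2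
  have hexp : ∀ c : ℝ, (c * (1 + a ^ 2 + b ^ 2) ^ α * ‖z - η‖) ^ 2
      = (c * (1 + a ^ 2 + b ^ 2) ^ α) ^ 2 * (a ^ 2 - 2 * u + b ^ 2) := by
    intro c; rw [show (c * (1 + a ^ 2 + b ^ 2) ^ α * ‖z - η‖) ^ 2
      = (c * (1 + a ^ 2 + b ^ 2) ^ α) ^ 2 * ‖z - η‖ ^ 2 from by ring, hD]
  constructor
  · rw [hN, hexp]
    rcases le_or_gt ((KK α * (1 + a ^ 2 + b ^ 2) ^ α) ^ 2)
        ((1 + a ^ 2) ^ α * (1 + b ^ 2) ^ α) with hW | hW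
    · have h5 : 0 ≤ (u + a * b)
          * ((1 + a ^ 2) ^ α * (1 + b ^ 2) ^ α - (KK α * (1 + a ^ 2 + b ^ 2) ^ α) ^ 2) :=
        mul_nonneg (by linarith) (by linarith)
      linarith [q4, hid, h5]
    · have h5 : 0 ≤ (a * b - u)
          * ((KK α * (1 + a ^ 2 + b ^ 2) ^ α) ^ 2 - (1 + a ^ 2) ^ α * (1 + b ^ 2) ^ α) :=
        mul_nonneg (by linarith) (by linarith)
      linarith [q2, hid, h5]
  · rw [hN, hexp]
    rcases le_or_gt ((1 + a ^ 2) ^ α * (1 + b ^ 2) ^ α)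
        (((KK α)⁻¹ * (1 + a ^ 2 + b ^ 2) ^ α) ^ 2) with hW | hW
    · have h5 : 0 ≤ (u + a * b)
          * (((KK α)⁻¹ * (1 + a ^ 2 + b ^ 2) ^ α) ^ 2 - (1 + a ^ 2) ^ α * (1 + b ^ 2) ^ α) :=
        mul_nonneg (by linarith) (by linarith)
      linarith [q3, hid, h5]
    · have h5 : 0 ≤ (a * b - u)
          * ((1 + a ^ 2) ^ α * (1 + b ^ 2) ^ α - ((KK α)⁻¹ * (1 + a ^ 2 + b ^ 2) ^ α) ^ 2) :=
        mul_nonneg (by linarith) (by linarith)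
      linarith [q1, hid, h5]


end VpAux

theorem stmt_2 {k : ℕ} (p : ℝ) (hp : 1 < p) :
    ∃ c : ℝ, 1 ≤ c ∧ ∀ z η : EuclideanSpace ℝ (Fin k),
      c⁻¹ * ‖z - η‖ ≤ ‖V p z - V p η‖ / (1 + ‖z‖ ^ 2 + ‖η‖ ^ 2) ^ ((p - 2) / 4) ∧
      ‖V p z - V p η‖ / (1 + ‖z‖ ^ 2 + ‖η‖ ^ 2) ^ ((p - 2) / 4) ≤ c * ‖z - η‖ := by
  have hq : 0 < 1 + 2 * ((p - 2) / 4) := by linarith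
  refine ⟨VpAux.KK ((p - 2) / 4), VpAux.one_le_KK _, fun z η => ?_⟩
  have hL : (0:ℝ) < (1 + ‖z‖ ^ 2 + ‖η‖ ^ 2) ^ ((p - 2) / 4) :=
    Real.rpow_pos_of_pos (by positivity) _
  have hK := VpAux.KK_pos' ((p - 2) / 4)
  have key : ‖V p z - V p η‖
        ≤ VpAux.KK ((p - 2) / 4) * (1 + ‖z‖ ^ 2 + ‖η‖ ^ 2) ^ ((p - 2) / 4) * ‖z - η‖ ∧
      (VpAux.KK ((p - 2) / 4))⁻¹ * (1 + ‖z‖ ^ 2 + ‖η‖ ^ 2) ^ ((p - 2) / 4) * ‖z - η‖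
        ≤ ‖V p z - V p η‖ := by
    rcases le_total ‖η‖ ‖z‖ with h | h
    · have H := VpAux.main_half ((p - 2) / 4) hq z η h
      have e : V p z - V p η
          = ((1 + ‖z‖ ^ 2) ^ ((p - 2) / 4)) • z - ((1 + ‖η‖ ^ 2) ^ ((p - 2) / 4)) • η := rfl
      constructor
      · apply le_of_pow_le_pow_left₀ two_ne_zero
          (mul_nonneg (mul_nonneg hK.le hL.le) (norm_nonneg _))
        rw [e]; exact H.1
      · apply le_of_pow_le_pow_left₀ two_ne_zero (norm_nonneg _)
        rw [e]; exact H.2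
    · have H := VpAux.main_half ((p - 2) / 4) hq η z h
      have e : V p η - V p z
          = ((1 + ‖η‖ ^ 2) ^ ((p - 2) / 4)) • η - ((1 + ‖z‖ ^ 2) ^ ((p - 2) / 4)) • z := rfl
      have e2 : ‖V p z - V p η‖ = ‖V p η - V p z‖ := norm_sub_rev _ _
      have e3 : ‖z - η‖ = ‖η - z‖ := norm_sub_rev _ _
      have e4 : (1 + ‖η‖ ^ 2 + ‖z‖ ^ 2 : ℝ) = 1 + ‖z‖ ^ 2 + ‖η‖ ^ 2 := by ring
      constructor
      · apply le_of_pow_le_pow_left₀ two_ne_zero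
          (mul_nonneg (mul_nonneg hK.le hL.le) (norm_nonneg _))
        rw [e2, e3, ← e4, e]; exact H.1
      · apply le_of_pow_le_pow_left₀ two_ne_zero (norm_nonneg _)
        rw [e2, e3, ← e4, e]; exact H.2
  obtain ⟨k1, k2⟩ := key
  constructor
  · rw [le_div_iff₀ hL]
    linarith [k2]
  · rw [div_le_iff₀ hL]
    linarith [k1]
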